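/- Let S be a subring of a ring R (both with the same identity) such that R, viewed as a left S-module, is Noetherian. If x ∈ S is invertible in R, then x⁻¹ ∈ S. -/
import Mathlib


/-- If `S` is a subring of a ring `R` such that `R` is Noetherian as a left `S`-module,
and `x ∈ S` is invertible in `R`, then `x⁻¹ ∈ S`. -/
theorem stmt_2 {R : Type*} [Ring R] (S : Subring R)
    (hNoeth : IsNoetherian S R)
    (x : Rˣ) (hx : (x : R) ∈ S) :
    ((x⁻¹ : Rˣ) : R) ∈ S := by
  set y : R := ((x⁻¹ : Rˣ) : R) with hy
  -- chain of submodules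
  let f : ℕ →o Submodule S R :=
    ⟨fun n => Submodule.span S ((fun k => y ^ k) '' Set.Iic n), by
      intro a b hab
      exact Submodule.span_mono (Set.image_mono (Set.Iic_subset_Iic.mpr hab))⟩
  obtain ⟨n, hn⟩ := (monotone_stabilizes_iff_noetherian).mpr hNoeth f
  have hmem : y ^ (n + 1) ∈ f n := by
    rw [hn (n + 1) (Nat.le_succ n)]
    exact Submodule.subset_span ⟨n + 1, Set.mem_Iic.mpr le_rfl, rfl⟩
  -- key: every element of f n, multiplied on the right by x ^ n, lands in S
  have key : ∀ r ∈ (f n : Submodule S R), r * (x : R) ^ n ∈ S := by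
    intro r hr
    refine Submodule.span_induction (p := fun r _ => r * (x : R) ^ n ∈ S) ?_ ?_ ?_ ?_ hr
    · rintro _ ⟨k, hk, rfl⟩
      have : y ^ k * (x : R) ^ n = ((x : R)) ^ (n - k) := by
        have : ((x⁻¹ : Rˣ) ^ k * x ^ n : Rˣ) = x ^ (n - k) := by
          rw [inv_pow, ← zpow_natCast x k, ← zpow_natCast x n, ← zpow_natCast x (n - k),
            ← zpow_neg, ← zpow_add]
          congr 1
          have hk' : k ≤ n := hk
          omega
        calc y ^ k * (x : R) ^ n = (((x⁻¹ : Rˣ) ^ k * x ^ n : Rˣ) : R) := by push_cast; rfl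
          _ = ((x : R)) ^ (n - k) := by rw [this]; push_cast; rfl
      rw [this]
      exact S.pow_mem hx _
    · simpa using S.zero_mem
    · intro a b _ _ ha hb
      rw [add_mul]; exact S.add_mem ha hb
    · intro s a _ ha
      have : (s • a) * (x : R) ^ n = (s : R) * (a * (x : R) ^ n) := by
        simp [Subring.smul_def, mul_assoc]
      rw [this]
      exact S.mul_mem s.2 ha
  have := key _ hmem
  have hfin : y ^ (n + 1) * (x : R) ^ n = y := by
    have : ((x⁻¹ : Rˣ) ^ (n + 1) * x ^ n : Rˣ) = x⁻¹ := by
      rw [inv_pow, ← zpow_natCast x (n + 1), ← zpow_natCast x n, ← zpow_neg, ← zpow_add]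
      norm_num
    calc y ^ (n + 1) * (x : R) ^ n = (((x⁻¹ : Rˣ) ^ (n + 1) * x ^ n : Rˣ) : R) := by
          push_cast; rfl
      _ = y := by rw [this]
  rwa [hfin] at this
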